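/- If q ∈ ℤ[x] is monic of degree g ≥ 1, then sym(q) is symplectically irreducible if and only if q is irreducible in ℤ[x]. -/

import Mathlib

open Polynomial

/-- Auxiliary version of `symPoly` with explicit degree parameter. -/
noncomputable def symAux (n : ℕ) (q : Polynomial ℤ) : Polynomial ℤ :=
  ∑ i ∈ Finset.range (n + 1), C (q.coeff i) * X ^ (n - i) * (X ^ 2 + 1) ^ i

lemma monic_X_sq_add_one : (X ^ 2 + 1 : Polynomial ℤ).Monic := by
  have := monic_X_pow_add_C (1 : ℤ) (n := 2) two_ne_zero
  simpa using this

lemma natDegree_X_sq_add_one : (X ^ 2 + 1 : Polynomial ℤ).natDegree = 2 := by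
  have : (X ^ 2 + C 1 : Polynomial ℤ).natDegree = 2 := natDegree_X_pow_add_C
  simpa using this

lemma natDegree_Xsq_pow (i : ℕ) : ((X ^ 2 + 1 : Polynomial ℤ) ^ i).natDegree = 2 * i := by
  rw [monic_X_sq_add_one.natDegree_pow, natDegree_X_sq_add_one, Nat.mul_comm]

lemma natDegree_term_le (n i : ℕ) (a : ℤ) (hi : i ≤ n) :
    (C a * X ^ (n - i) * (X ^ 2 + 1) ^ i : Polynomial ℤ).natDegree ≤ n + i := by
  apply natDegree_mul_le.trans
  have h1 : (C a * X ^ (n - i) : Polynomial ℤ).natDegree ≤ n - i := natDegree_C_mul_X_pow_le a _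
  have h2 := (natDegree_Xsq_pow i).le
  omega

lemma natDegree_symAux_le (n : ℕ) (q : Polynomial ℤ) : (symAux n q).natDegree ≤ 2 * n := by
  apply natDegree_sum_le_of_forall_le
  intro i hi
  have hi' : i ≤ n := Nat.lt_succ_iff.mp (Finset.mem_range.mp hi)
  exact (natDegree_term_le n i _ hi').trans (by omega)

lemma coeff_symAux_top (n : ℕ) (q : Polynomial ℤ) : (symAux n q).coeff (2 * n) = q.coeff n := by
  rw [symAux, finset_sum_coeff, Finset.sum_range_succ]
  have h0 : ∀ i ∈ Finset.range n,
      (C (q.coeff i) * X ^ (n - i) * (X ^ 2 + 1) ^ i : Polynomial ℤ).coeff (2 * n) = 0 := by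
    intro i hi
    have hi' : i < n := Finset.mem_range.mp hi
    apply coeff_eq_zero_of_natDegree_lt
    exact lt_of_le_of_lt (natDegree_term_le n i _ hi'.le) (by omega)
  rw [Finset.sum_eq_zero h0, zero_add, Nat.sub_self, pow_zero, mul_one]
  have hmon : ((X ^ 2 + 1 : Polynomial ℤ) ^ n).Monic := monic_X_sq_add_one.pow n
  rw [coeff_C_mul, ← natDegree_Xsq_pow n, hmon.coeff_natDegree, mul_one]

lemma reflect_X_sq_add_one_pow (i : ℕ) :
    reflect (2 * i) ((X ^ 2 + 1 : Polynomial ℤ) ^ i) = (X ^ 2 + 1) ^ i := by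
  induction i with
  | zero =>
      have := reflect_C_mul_X_pow 0 0 (c := (1 : ℤ))
      simpa using this
  | succ k ih =>
      have h2 : (X ^ 2 + 1 : Polynomial ℤ).natDegree ≤ 2 := natDegree_X_sq_add_one.le
      have hk : ((X ^ 2 + 1 : Polynomial ℤ) ^ k).natDegree ≤ 2 * k := (natDegree_Xsq_pow k).le
      have h22 : (2 : ℕ) * (k + 1) = 2 + 2 * k := by ring
      rw [pow_succ, mul_comm ((X ^ 2 + 1 : Polynomial ℤ) ^ k), h22,
        reflect_mul _ _ h2 hk, ih]
      congr 1
      have hr : reflect 2 (X ^ 2 + 1 : Polynomial ℤ)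
          = reflect 2 (C 1 * X ^ 2) + reflect 2 (C 1 * X ^ 0) := by
        rw [← reflect_add]; congr 1; simp
      rw [hr, reflect_C_mul_X_pow, reflect_C_mul_X_pow]
      simp [revAt_le]
      ring

lemma reflect_symAux (n : ℕ) (q : Polynomial ℤ) :
    reflect (2 * n) (symAux n q) = symAux n q := by
  rw [symAux]
  have hsum : ∀ (f : ℕ → Polynomial ℤ),
      reflect (2 * n) (∑ i ∈ Finset.range (n + 1), f i)
        = ∑ i ∈ Finset.range (n + 1), reflect (2 * n) (f i) := by
    intro f
    induction (Finset.range (n + 1)) using Finset.cons_induction with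
    | empty => simp
    | cons a s ha ih => rw [Finset.sum_cons, Finset.sum_cons, reflect_add, ih]
  rw [hsum]
  refine Finset.sum_congr rfl fun i hi => ?_
  have hi' : i ≤ n := Nat.lt_succ_iff.mp (Finset.mem_range.mp hi)
  have hsplit : 2 * n = 2 * (n - i) + 2 * i := by omega
  have h1 : (C (q.coeff i) * X ^ (n - i) : Polynomial ℤ).natDegree ≤ 2 * (n - i) :=
    (natDegree_C_mul_X_pow_le _ _).trans (by omega)
  have h2 : ((X ^ 2 + 1 : Polynomial ℤ) ^ i).natDegree ≤ 2 * i := (natDegree_Xsq_pow i).le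
  rw [hsplit, reflect_mul _ _ h1 h2, reflect_X_sq_add_one_pow, reflect_C_mul_X_pow,
    revAt_le (by omega : n - i ≤ 2 * (n - i))]
  congr 3
  omega

lemma coeff_Xsq_pow_palin (m : ℕ) (j : ℕ) (hj : j ≤ 2 * m) :
    ((X ^ 2 + 1 : Polynomial ℤ) ^ m).coeff j
      = ((X ^ 2 + 1 : Polynomial ℤ) ^ m).coeff (2 * m - j) := by
  conv_lhs => rw [← reflect_X_sq_add_one_pow m]
  rw [coeff_reflect, revAt_le hj]

lemma eval_symAux (n : ℕ) (q : Polynomial ℤ) (hq : q.natDegree ≤ n) (x : ℝ) (hx : x ≠ 0) :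
    ((symAux n q).map (Int.castRingHom ℝ)).eval x
      = x ^ n * ((q.map (Int.castRingHom ℝ)).eval (x + x⁻¹)) := by
  have hdeg : (q.map (Int.castRingHom ℝ)).natDegree < n + 1 :=
    lt_of_le_of_lt (le_trans natDegree_map_le hq) (Nat.lt_succ_self n)
  rw [symAux, Polynomial.map_sum, Polynomial.eval_finset_sum,
    eval_eq_sum_range' hdeg, Finset.mul_sum]
  refine Finset.sum_congr rfl fun i hi => ?_
  have hi' : i ≤ n := Nat.lt_succ_iff.mp (Finset.mem_range.mp hi)
  simp only [Polynomial.map_mul, Polynomial.map_pow, Polynomial.map_add, map_C, map_X,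
    Polynomial.map_one, eval_mul, eval_pow, eval_C, eval_X, eval_add, eval_one, coeff_map]
  have h1 : (x + x⁻¹) ^ i = (x ^ 2 + 1) ^ i / x ^ i := by
    rw [← div_pow]
    congr 1
    field_simp
  have h2 : x ^ n = x ^ (n - i) * x ^ i := (pow_sub_mul_pow x hi').symm
  rw [h1, h2]
  field_simp

lemma shift_injOn : Set.InjOn (fun x : ℝ => x + x⁻¹) (Set.Ioi 1) := by
  intro a ha b hb h
  simp only [Set.mem_Ioi] at ha hb
  have ha0 : a ≠ 0 := by positivity
  have hb0 : b ≠ 0 := by positivity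
  simp only at h
  have : (a - b) * (a * b - 1) = 0 := by
    field_simp at h
    nlinarith [h]
  rcases mul_eq_zero.mp this with h1 | h1
  · linarith
  · nlinarith

lemma eq_of_eval_shift_eq (p q : Polynomial ℤ)
    (h : ∀ x : ℝ, 1 < x → (p.map (Int.castRingHom ℝ)).eval (x + x⁻¹)
        = (q.map (Int.castRingHom ℝ)).eval (x + x⁻¹)) : p = q := by
  have hmap : p.map (Int.castRingHom ℝ) = q.map (Int.castRingHom ℝ) := by
    have hz : p.map (Int.castRingHom ℝ) - q.map (Int.castRingHom ℝ) = 0 := by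
      apply Polynomial.eq_zero_of_infinite_isRoot
      apply Set.Infinite.mono (s := (fun x : ℝ => x + x⁻¹) '' Set.Ioi 1)
      · rintro y ⟨x, hx, rfl⟩
        simp only [Set.mem_setOf_eq, IsRoot, eval_sub]
        rw [h x hx, sub_self]
      · exact Set.Infinite.image shift_injOn (Set.Ioi_infinite 1)
    linear_combination hz
  exact Polynomial.map_injective _ Int.cast_injective hmap

lemma eq_of_evalR_eq (p q : Polynomial ℤ)
    (h : ∀ x : ℝ, 1 < x → (p.map (Int.castRingHom ℝ)).eval x
        = (q.map (Int.castRingHom ℝ)).eval x) : p = q := by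
  have hmap : p.map (Int.castRingHom ℝ) = q.map (Int.castRingHom ℝ) := by
    have hz : p.map (Int.castRingHom ℝ) - q.map (Int.castRingHom ℝ) = 0 := by
      apply Polynomial.eq_zero_of_infinite_isRoot
      apply Set.Infinite.mono (s := Set.Ioi (1:ℝ))
      · intro y hy
        simp only [Set.mem_setOf_eq, IsRoot, eval_sub]
        rw [h y hy, sub_self]
      · exact Set.Ioi_infinite 1
    linear_combination hz
  exact Polynomial.map_injective _ Int.cast_injective hmap

lemma symAux_mul (q₁ q₂ : Polynomial ℤ) (n₁ n₂ : ℕ)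
    (h₁ : q₁.natDegree ≤ n₁) (h₂ : q₂.natDegree ≤ n₂) :
    symAux (n₁ + n₂) (q₁ * q₂) = symAux n₁ q₁ * symAux n₂ q₂ := by
  apply eq_of_evalR_eq
  intro x hx
  have hx0 : x ≠ 0 := by positivity
  have hm : (q₁ * q₂).natDegree ≤ n₁ + n₂ := natDegree_mul_le.trans (add_le_add h₁ h₂)
  rw [eval_symAux _ _ hm x hx0, Polynomial.map_mul (f := Int.castRingHom ℝ) (p := symAux n₁ q₁),
    eval_mul, eval_symAux _ _ h₁ x hx0, eval_symAux _ _ h₂ x hx0, Polynomial.map_mul, eval_mul]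
  ring

lemma symAux_injOn (n : ℕ) (p q : Polynomial ℤ) (hp : p.natDegree ≤ n) (hq : q.natDegree ≤ n)
    (h : symAux n p = symAux n q) : p = q := by
  apply eq_of_eval_shift_eq
  intro x hx
  have hx0 : x ≠ 0 := by positivity
  have := congrArg (fun r => ((r.map (Int.castRingHom ℝ)).eval x)) h
  simp only [eval_symAux _ _ hp x hx0, eval_symAux _ _ hq x hx0] at this
  exact mul_left_cancel₀ (pow_ne_zero n hx0) this

lemma symAux_surj : ∀ n : ℕ, ∀ r : Polynomial ℤ, r.natDegree ≤ 2 * n →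
    (∀ i ≤ 2 * n, r.coeff i = r.coeff (2 * n - i)) →
    ∃ q : Polynomial ℤ, q.natDegree ≤ n ∧ q.coeff n = r.coeff (2 * n) ∧ symAux n q = r := by
  intro n
  induction n with
  | zero =>
      intro r hr _
      refine ⟨r, by simpa using hr, by simp, ?_⟩
      rw [symAux]
      simp only [Nat.zero_add, Finset.range_one, Finset.sum_singleton, Nat.sub_self,
        pow_zero, mul_one]
      exact (eq_C_of_natDegree_le_zero (by simpa using hr)).symm
  | succ k ih =>
      intro r hr hpal
      set c : ℤ := r.coeff (2 * (k + 1)) with hc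
      set s : Polynomial ℤ := r - C c * (X ^ 2 + 1) ^ (k + 1) with hs
      have hmon : ((X ^ 2 + 1 : Polynomial ℤ) ^ (k + 1)).Monic := monic_X_sq_add_one.pow _
      have hsiff : ∀ j, s.coeff j = r.coeff j - c * ((X ^ 2 + 1 : Polynomial ℤ) ^ (k+1)).coeff j := by
        intro j; simp [hs, coeff_C_mul]
      have hstop : s.coeff (2 * (k + 1)) = 0 := by
        rw [hsiff]
        have : ((X ^ 2 + 1 : Polynomial ℤ) ^ (k+1)).coeff (2 * (k+1)) = 1 := by
          rw [← natDegree_Xsq_pow (k+1)]; exact hmon.coeff_natDegree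
        rw [this]; ring
      have hsdeg : s.natDegree ≤ 2 * k + 1 := by
        rw [natDegree_le_iff_coeff_eq_zero]
        intro N hN
        rcases Nat.lt_or_ge (2 * (k + 1)) N with h | h
        · rw [hsiff, coeff_eq_zero_of_natDegree_lt (lt_of_le_of_lt hr h),
            coeff_eq_zero_of_natDegree_lt (lt_of_le_of_lt (natDegree_Xsq_pow (k+1)).le h)]
          ring
        · have : N = 2 * (k + 1) := by omega
          rw [this]; exact hstop
      have hspal : ∀ i ≤ 2 * (k + 1), s.coeff i = s.coeff (2 * (k + 1) - i) := by
        intro i hi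
        rw [hsiff, hsiff, hpal i hi, coeff_Xsq_pow_palin (k+1) i hi]
      have hs0 : s.coeff 0 = 0 := by
        rw [hspal 0 (by omega), Nat.sub_zero, hstop]
      set t : Polynomial ℤ := s.divX with ht
      have hts : X * t + C (s.coeff 0) = s := X_mul_divX_add s
      have hXt : X * t = s := by rw [← hts, hs0, map_zero, add_zero]
      have htc : ∀ j, t.coeff j = s.coeff (j + 1) := fun j => coeff_divX
      have htdeg : t.natDegree ≤ 2 * k := by
        rw [natDegree_le_iff_coeff_eq_zero]
        intro N hN
        rw [htc, coeff_eq_zero_of_natDegree_lt (lt_of_le_of_lt hsdeg (by omega))]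
      have htpal : ∀ i ≤ 2 * k, t.coeff i = t.coeff (2 * k - i) := by
        intro i hi
        rw [htc, htc]
        have h1 : i + 1 ≤ 2 * (k + 1) := by omega
        rw [hspal (i + 1) h1]
        congr 1
        omega
      obtain ⟨q', hq'deg, hq'c, hq'sym⟩ := ih t htdeg htpal
      refine ⟨q' + C c * X ^ (k + 1), ?_, ?_, ?_⟩
      · apply natDegree_add_le_of_degree_le (hq'deg.trans (by omega))
        exact natDegree_C_mul_X_pow_le c (k + 1)
      · rw [coeff_add, coeff_C_mul, coeff_X_pow, if_pos rfl, mul_one,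
          coeff_eq_zero_of_natDegree_lt (lt_of_le_of_lt hq'deg (by omega))]
        ring
      · rw [symAux, Finset.sum_range_succ]
        have hcoeff : ∀ i ∈ Finset.range (k + 1),
            (q' + C c * X ^ (k + 1)).coeff i = q'.coeff i := by
          intro i hi
          have : i < k + 1 := Finset.mem_range.mp hi
          rw [coeff_add, coeff_C_mul, coeff_X_pow, if_neg (by omega), mul_zero, add_zero]
        have htop : (q' + C c * X ^ (k + 1)).coeff (k + 1) = c := by
          rw [coeff_add, coeff_C_mul, coeff_X_pow, if_pos rfl, mul_one,
            coeff_eq_zero_of_natDegree_lt (lt_of_le_of_lt hq'deg (by omega))]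
          ring
        rw [htop, Nat.sub_self, pow_zero, mul_one]
        have hsum : ∑ i ∈ Finset.range (k + 1),
            C ((q' + C c * X ^ (k + 1)).coeff i) * X ^ (k + 1 - i) * (X ^ 2 + 1) ^ i
            = X * symAux k q' := by
          rw [symAux, Finset.mul_sum]
          refine Finset.sum_congr rfl fun i hi => ?_
          rw [hcoeff i hi]
          have hik : i ≤ k := Nat.lt_succ_iff.mp (Finset.mem_range.mp hi)
          have : k + 1 - i = (k - i) + 1 := by omega
          rw [this, pow_succ]
          ring
        rw [hsum, hq'sym, hXt, hs]
        ring

/-- For a polynomial `q = a_g x^g + … + a_0` of degree `g`,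
`sym(q) = ∑ a_i x^{g-i} (x²+1)^i`, i.e. `sym(q)(x) = x^g · q(x + 1/x)`. -/
noncomputable def symPoly (q : Polynomial ℤ) : Polynomial ℤ :=
  ∑ i ∈ Finset.range (q.natDegree + 1),
    Polynomial.C (q.coeff i) * Polynomial.X ^ (q.natDegree - i) * (Polynomial.X ^ 2 + 1) ^ i

/-- A polynomial is symplectic if it is monic of even degree `2n` (`n ≥ 1`) and palindromic. -/
def IsSymplecticPoly (p : Polynomial ℤ) : Prop :=
  p.Monic ∧ (∃ n : ℕ, 1 ≤ n ∧ p.natDegree = 2 * n) ∧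
    ∀ i ≤ p.natDegree, p.coeff i = p.coeff (p.natDegree - i)

/-- A symplectic polynomial is symplectically irreducible if it is not the
product of two symplectic polynomials. -/
def SymplecticallyIrreducible (p : Polynomial ℤ) : Prop :=
  IsSymplecticPoly p ∧
    ¬ ∃ p₁ p₂ : Polynomial ℤ, IsSymplecticPoly p₁ ∧ IsSymplecticPoly p₂ ∧ p = p₁ * p₂

lemma symPoly_eq (q : Polynomial ℤ) : symPoly q = symAux q.natDegree q := rfl

lemma natDegree_symPoly (q : Polynomial ℤ) (hq : q.Monic) :
    (symPoly q).natDegree = 2 * q.natDegree := by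
  apply le_antisymm
  · rw [symPoly_eq]; exact natDegree_symAux_le _ _
  · apply le_natDegree_of_ne_zero
    rw [symPoly_eq, coeff_symAux_top, hq.coeff_natDegree]
    exact one_ne_zero

lemma monic_symPoly (q : Polynomial ℤ) (hq : q.Monic) : (symPoly q).Monic := by
  unfold Polynomial.Monic Polynomial.leadingCoeff
  rw [natDegree_symPoly q hq, symPoly_eq, coeff_symAux_top, hq.coeff_natDegree]

lemma isSymplectic_symPoly (q : Polynomial ℤ) (hq : q.Monic) (hdeg : 1 ≤ q.natDegree) :
    IsSymplecticPoly (symPoly q) := by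
  refine ⟨monic_symPoly q hq, ⟨q.natDegree, hdeg, natDegree_symPoly q hq⟩, ?_⟩
  intro i hi
  rw [natDegree_symPoly q hq] at hi ⊢
  conv_lhs => rw [symPoly_eq, ← reflect_symAux q.natDegree q]
  rw [coeff_reflect, revAt_le hi, symPoly_eq]

lemma symplectic_exists_preimage (p : Polynomial ℤ) (hp : IsSymplecticPoly p) :
    ∃ q : Polynomial ℤ, q.Monic ∧ 1 ≤ q.natDegree ∧ symPoly q = p ∧
      p.natDegree = 2 * q.natDegree := by
  obtain ⟨hmon, ⟨n, hn1, hn⟩, hpal⟩ := hp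
  obtain ⟨q, hqdeg, hqc, hqsym⟩ := symAux_surj n p (hn ▸ le_refl _) (by rw [← hn]; exact hpal)
  have hc1 : q.coeff n = 1 := by
    rw [hqc, ← hn, hmon.coeff_natDegree]
  have hqn : q.natDegree = n :=
    le_antisymm hqdeg (le_natDegree_of_ne_zero (hc1 ▸ one_ne_zero))
  have hqmon : q.Monic := by
    unfold Polynomial.Monic Polynomial.leadingCoeff
    rw [hqn, hc1]
  refine ⟨q, hqmon, by omega, ?_, by omega⟩
  rw [symPoly_eq, hqn, hqsym]

lemma symPoly_mul (q₁ q₂ : Polynomial ℤ) (h₁ : q₁.Monic) (h₂ : q₂.Monic) :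
    symPoly (q₁ * q₂) = symPoly q₁ * symPoly q₂ := by
  rw [symPoly_eq, symPoly_eq, symPoly_eq, h₁.natDegree_mul h₂]
  exact symAux_mul q₁ q₂ _ _ le_rfl le_rfl

lemma monic_factors (q a b : Polynomial ℤ) (hq : q.Monic) (hab : q = a * b)
    (ha : ¬IsUnit a) (hb : ¬IsUnit b) :
    ∃ a' b' : Polynomial ℤ, a'.Monic ∧ b'.Monic ∧ 1 ≤ a'.natDegree ∧ 1 ≤ b'.natDegree ∧
      q = a' * b' := by
  have hlc : a.leadingCoeff * b.leadingCoeff = 1 := by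
    rw [← leadingCoeff_mul, ← hab, hq]
  have key : ∀ a' b' : Polynomial ℤ, a'.Monic → b'.Monic → ¬IsUnit a' → ¬IsUnit b' →
      q = a' * b' → ∃ a' b' : Polynomial ℤ, a'.Monic ∧ b'.Monic ∧
      1 ≤ a'.natDegree ∧ 1 ≤ b'.natDegree ∧ q = a' * b' := by
    intro a' b' ha' hb' hua hub heq
    refine ⟨a', b', ha', hb', ?_, ?_, heq⟩
    · by_contra h
      exact hua (by rw [ha'.natDegree_eq_zero.mp (by omega)]; exact isUnit_one)
    · by_contra h
      exact hub (by rw [hb'.natDegree_eq_zero.mp (by omega)]; exact isUnit_one)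
  rcases Int.mul_eq_one_iff_eq_one_or_neg_one.mp hlc with ⟨h1, h2⟩ | ⟨h1, h2⟩
  · exact key a b h1 h2 ha hb hab
  · refine key (-a) (-b) ?_ ?_ (fun h => ha (by simpa using h.neg)) (fun h => hb (by simpa using h.neg)) (by rw [neg_mul_neg]; exact hab)
    · unfold Polynomial.Monic; rw [leadingCoeff_neg, h1]; ring
    · unfold Polynomial.Monic; rw [leadingCoeff_neg, h2]; ring

theorem sym_irreducible_iff (q : Polynomial ℤ) (g : ℕ) (hg : 1 ≤ g)
    (hq : q.Monic) (hdeg : q.natDegree = g) :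
    SymplecticallyIrreducible (symPoly q) ↔ Irreducible q := by
  have hqdeg1 : 1 ≤ q.natDegree := by omega
  constructor
  · rintro ⟨_, hnofac⟩
    constructor
    · intro hu
      have := natDegree_eq_zero_of_isUnit hu
      omega
    · intro a b hab
      by_contra hcon
      push_neg at hcon
      obtain ⟨a', b', ha', hb', ha1, hb1, heq⟩ :=
        monic_factors q a b hq hab hcon.1 hcon.2
      exact hnofac ⟨symPoly a', symPoly b', isSymplectic_symPoly a' ha' ha1,
        isSymplectic_symPoly b' hb' hb1, by rw [heq, symPoly_mul a' b' ha' hb']⟩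
  · intro hirr
    refine ⟨isSymplectic_symPoly q hq hqdeg1, ?_⟩
    rintro ⟨p₁, p₂, h1, h2, heq⟩
    obtain ⟨q₁, hq₁m, hq₁d, hq₁s, hq₁deg⟩ := symplectic_exists_preimage p₁ h1
    obtain ⟨q₂, hq₂m, hq₂d, hq₂s, hq₂deg⟩ := symplectic_exists_preimage p₂ h2
    have hp1m : p₁.Monic := h1.1
    have hp2m : p₂.Monic := h2.1
    have hdegsum : q.natDegree = q₁.natDegree + q₂.natDegree := by
      have h3 : (symPoly q).natDegree = 2 * q.natDegree := natDegree_symPoly q hq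
      have h4 : (p₁ * p₂).natDegree = p₁.natDegree + p₂.natDegree := hp1m.natDegree_mul hp2m
      rw [heq] at h3
      omega
    have hfac : q = q₁ * q₂ := by
      apply symAux_injOn q.natDegree q (q₁ * q₂) le_rfl
        (by rw [hq₁m.natDegree_mul hq₂m]; omega)
      rw [← symPoly_eq, heq, ← hq₁s, ← hq₂s, ← symPoly_mul q₁ q₂ hq₁m hq₂m, symPoly_eq,
        hq₁m.natDegree_mul hq₂m, ← hdegsum]
    rcases hirr.2 hfac with h | h
    · have := natDegree_eq_zero_of_isUnit h; omega
    · have := natDegree_eq_zero_of_isUnit h; omega
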